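/- Let G be a connected finite simple graph with m edges, x a Perron vector of G, and u* a vertex at which x attains its maximum. With A = N(u*), A_+ the set of vertices of A having a neighbor in A, and B = V(G) \ (A ∪ {u*}), one has ρ(G)² ≤ m − e(B) + e(A_+); in particular ρ(G)² ≤ m + e(A_+). -/

import Mathlib

open Matrix Finset

/-- The spectral radius of a finite simple graph: the largest (real) eigenvalue of its
adjacency matrix, expressed as the supremum of the set of real eigenvalues. -/
noncomputable def specRad {V : Type*} [Fintype V] (G : SimpleGraph V)
    [DecidableRel G.Adj] : ℝ :=
  sSup {t : ℝ | ∃ x : V → ℝ, x ≠ 0 ∧ (G.adjMatrix ℝ) *ᵥ x = t • x}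

/-- `H` is contained in `G` as a (not necessarily induced) subgraph. -/
def ContainsSub {α β : Type*} (H : SimpleGraph α) (G : SimpleGraph β) : Prop :=
  ∃ f : α → β, Function.Injective f ∧ ∀ ⦃a b⦄, H.Adj a b → G.Adj (f a) (f b)

/-- The fan graph `H₇ = K₁ ∨ P₆`: vertex `6` is joined to every vertex of the
path `0-1-2-3-4-5`. -/
def fanH7 : SimpleGraph (Fin 7) :=
  SimpleGraph.fromRel (fun i j => i = 6 ∨ j = 6 ∨ (j : ℕ) = (i : ℕ) + 1)

/-- A graph is `H₇`-free if it contains no subgraph isomorphic to the fan `H₇`. -/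
def H7Free {β : Type*} (G : SimpleGraph β) : Prop := ¬ ContainsSub fanH7 G

/-- `K₃ ∨ kK₁`: the join of a triangle (vertices `0,1,2`) with `k` isolated vertices. -/
def K3Join (k : ℕ) : SimpleGraph (Fin (k + 3)) :=
  SimpleGraph.fromRel (fun i j => (i : ℕ) < 3 ∨ (j : ℕ) < 3)

instance (k : ℕ) : DecidableRel (K3Join k).Adj := fun a b =>
  decidable_of_iff (a ≠ b ∧ ((a : ℕ) < 3 ∨ (b : ℕ) < 3)) (by
    rw [K3Join, SimpleGraph.fromRel_adj]; tauto)

/-- `K₂ ∨ tK₁`: the join of an edge (vertices `0,1`) with `t` isolated vertices. -/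
def K2Join (t : ℕ) : SimpleGraph (Fin (t + 2)) :=
  SimpleGraph.fromRel (fun i j => (i : ℕ) < 2 ∨ (j : ℕ) < 2)

/-- The star `K_{1,s}`: vertex `0` joined to `s` independent vertices. -/
def starGraph (s : ℕ) : SimpleGraph (Fin (s + 1)) :=
  SimpleGraph.fromRel (fun i j => i = 0 ∨ j = 0)

/-- `K₁ ∨ (K₃ ∪ tK₁)`: vertex `0` joined to all of a triangle `1,2,3` and to `t`
further vertices which are otherwise isolated. -/
def K1JoinK3Union (t : ℕ) : SimpleGraph (Fin (t + 4)) :=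
  SimpleGraph.fromRel (fun i j => i = 0 ∨ j = 0 ∨ ((i : ℕ) ≤ 3 ∧ (j : ℕ) ≤ 3))

/-- `C₆^△`: a 6-cycle `0-1-2-3-4-5-0` plus a vertex `6` adjacent to the two adjacent
cycle vertices `0` and `1`. -/
def C6Tri : SimpleGraph (Fin 7) :=
  SimpleGraph.fromRel (fun i j =>
    ((i : ℕ) < 6 ∧ (j : ℕ) = ((i : ℕ) + 1) % 6) ∨ (i = 6 ∧ (j = 0 ∨ j = 1)))

/-- `F₃`: three triangles `{0,1,2}`, `{0,3,4}`, `{0,5,6}` sharing the common vertex `0`. -/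
def friendshipF3 : SimpleGraph (Fin 7) :=
  SimpleGraph.fromRel (fun i j =>
    i = 0 ∨ j = 0 ∨ ((j : ℕ) = (i : ℕ) + 1 ∧ (i : ℕ) % 2 = 1))

/-- The number of edges of `G` with both end vertices in `S`. -/
noncomputable def edgesIn {V : Type*} (G : SimpleGraph V) (S : Set V) : ℕ :=
  {e ∈ G.edgeSet | ∀ v ∈ e, v ∈ S}.ncard
section Aux

variable {V : Type} [Fintype V] [DecidableEq V] (G : SimpleGraph V) [DecidableRel G.Adj]

/-- The restriction of `G` to edges inside a finset `S`. -/
private def restrictG (S : Finset V) : SimpleGraph V where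
  Adj u v := G.Adj u v ∧ u ∈ S ∧ v ∈ S
  symm := ⟨fun u v h => ⟨h.1.symm, h.2.2, h.2.1⟩⟩
  loopless := ⟨fun u h => G.loopless.irrefl u h.1⟩

private instance (S : Finset V) : DecidableRel (restrictG G S).Adj :=
  fun u v => inferInstanceAs (Decidable (G.Adj u v ∧ u ∈ S ∧ v ∈ S))

private lemma restrictG_edgeSet (S : Finset V) :
    (restrictG G S).edgeSet = {e ∈ G.edgeSet | ∀ v ∈ e, v ∈ (S : Set V)} := by
  ext e
  induction e with
  | _ a b =>
    simp only [SimpleGraph.mem_edgeSet, Set.mem_setOf_eq, Sym2.mem_iff, restrictG]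
    constructor
    · rintro ⟨h, ha, hb⟩
      exact ⟨h, by rintro v (rfl | rfl) <;> simpa⟩
    · rintro ⟨h, hS⟩
      exact ⟨h, by simpa using hS a (Or.inl rfl), by simpa using hS b (Or.inr rfl)⟩

private lemma edgesIn_eq_card (S : Finset V) :
    edgesIn G (S : Set V) = (restrictG G S).edgeFinset.card := by
  rw [edgesIn, ← restrictG_edgeSet, ← Set.ncard_coe_finset, SimpleGraph.coe_edgeFinset]

private lemma restrictG_degree (S : Finset V) (u : V) :
    (restrictG G S).degree u =
      if u ∈ S then (G.neighborFinset u ∩ S).card else 0 := by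
  split_ifs with h
  · rw [SimpleGraph.degree]
    congr 1
    ext v
    rw [SimpleGraph.mem_neighborFinset]; simp [restrictG, h]
  · rw [SimpleGraph.degree, Finset.card_eq_zero]
    ext v
    simp only [SimpleGraph.mem_neighborFinset, Finset.notMem_empty, iff_false]
    exact fun hadj => h hadj.2.1

private lemma two_mul_edges_eq (S : Finset V) :
    2 * (restrictG G S).edgeFinset.card = ∑ u ∈ S, (G.neighborFinset u ∩ S).card := by
  rw [← SimpleGraph.sum_degrees_eq_twice_card_edges]
  rw [Finset.sum_congr rfl (fun u _ => restrictG_degree G S u)]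
  rw [Finset.sum_ite_mem, Finset.univ_inter]

end Aux

/-- For a connected graph `G` with `m` edges, a Perron vector `x` maximized
at `u*`, `A = N(u*)`, `A₊` the vertices of `A` with a neighbor in `A`, and
`B = V ∖ (A ∪ {u*})`: `ρ(G)² ≤ m − e(B) + e(A₊)`, and in particular `ρ(G)² ≤ m + e(A₊)`. -/
theorem specRad_sq_le (m : ℕ) {V : Type} [Fintype V] [DecidableEq V]
    (G : SimpleGraph V) [DecidableRel G.Adj] (hconn : G.Connected)
    (hsize : G.edgeFinset.card = m)
    (x : V → ℝ) (hpos : ∀ v, 0 < x v) (heig : G.adjMatrix ℝ *ᵥ x = specRad G • x)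
    (ustar : V) (hmax : ∀ v, x v ≤ x ustar)
    (A Aplus B : Finset V)
    (hA : A = G.neighborFinset ustar)
    (hAplus : Aplus = A.filter (fun u => ∃ w ∈ A, G.Adj u w))
    (hB : B = Finset.univ \ insert ustar A) :
    (specRad G) ^ 2 ≤ (m : ℝ) - edgesIn G (B : Set V) + edgesIn G (Aplus : Set V) ∧
    (specRad G) ^ 2 ≤ (m : ℝ) + edgesIn G (Aplus : Set V) := by
  classical
  set ρ := specRad G with hρ
  -- basic facts
  have hustar_notin_A : ustar ∉ A := by simp [hA]
  -- eigen-equation pointwise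
  have hmv : ∀ v, ρ * x v = ∑ u ∈ G.neighborFinset v, x u := by
    intro v
    have h := congrFun heig v
    rw [SimpleGraph.adjMatrix_mulVec_apply] at h
    simpa [Pi.smul_apply, smul_eq_mul] using h.symm
  -- abbreviations
  set D : ℕ := ∑ u ∈ A, G.degree u with hD
  set eA : ℕ := (restrictG G A).edgeFinset.card with heA
  set eB : ℕ := (restrictG G B).edgeFinset.card with heB
  -- spectral estimate: ρ² ≤ D
  have key : ρ ^ 2 * x ustar ≤ (D : ℝ) * x ustar := by
    have h1 : ρ * x ustar = ∑ u ∈ A, x u := by rw [hA]; exact hmv ustar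
    calc ρ ^ 2 * x ustar = ρ * (ρ * x ustar) := by ring
      _ = ρ * ∑ u ∈ A, x u := by rw [h1]
      _ = ∑ u ∈ A, ρ * x u := Finset.mul_sum _ _ _
      _ = ∑ u ∈ A, ∑ v ∈ G.neighborFinset u, x v :=
          Finset.sum_congr rfl fun u _ => hmv u
      _ ≤ ∑ u ∈ A, (G.degree u : ℝ) * x ustar := by
          refine Finset.sum_le_sum fun u _ => ?_
          have := Finset.sum_le_card_nsmul (G.neighborFinset u) x (x ustar)
            (fun v _ => hmax v)
          rw [nsmul_eq_mul] at this
          rwa [← SimpleGraph.card_neighborFinset_eq_degree]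
      _ = (D : ℝ) * x ustar := by rw [← Finset.sum_mul, hD]; push_cast; ring
  have hρ2D : ρ ^ 2 ≤ (D : ℝ) := le_of_mul_le_mul_right key (hpos ustar)
  -- degree decomposition
  have hdeg_decomp : ∀ u : V, G.degree u =
      (G.neighborFinset u ∩ {ustar}).card + (G.neighborFinset u ∩ A).card +
      (G.neighborFinset u ∩ B).card := by
    intro u
    have h1 : (G.neighborFinset u ∩ insert ustar A).card +
        (G.neighborFinset u \ insert ustar A).card = G.degree u :=
      Finset.card_inter_add_card_sdiff _ _
    have h2 : G.neighborFinset u ∩ B = G.neighborFinset u \ insert ustar A := by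
      rw [hB]; ext v
      simp only [Finset.mem_inter, Finset.mem_sdiff, Finset.mem_univ, true_and]
    have h3 : G.neighborFinset u ∩ insert ustar A =
        (G.neighborFinset u ∩ {ustar}) ∪ (G.neighborFinset u ∩ A) := by
      ext v; simp [Finset.mem_insert, and_or_left]
    have hdisj : Disjoint (G.neighborFinset u ∩ {ustar}) (G.neighborFinset u ∩ A) := by
      rw [Finset.disjoint_left]
      intro v hv hv'
      rw [Finset.mem_inter, Finset.mem_singleton] at hv
      rw [Finset.mem_inter] at hv'
      exact hustar_notin_A (hv.2 ▸ hv'.2)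
    rw [← h1, h2, h3, Finset.card_union_of_disjoint hdisj]
  -- b ∈ B has no neighbor ustar
  have hBno : ∀ b ∈ B, (G.neighborFinset b ∩ {ustar}).card = 0 := by
    intro b hb
    rw [Finset.card_eq_zero]
    ext v
    simp only [Finset.mem_inter, Finset.mem_singleton, Finset.notMem_empty, iff_false]
    rintro ⟨hadj, rfl⟩
    rw [SimpleGraph.mem_neighborFinset] at hadj
    have : b ∈ A := by rw [hA, SimpleGraph.mem_neighborFinset]; exact hadj.symm
    rw [hB] at hb
    simp at hb
    exact hb.2 this
  -- a ∈ A has exactly the neighbor ustar in {ustar}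
  have hAone : ∀ a ∈ A, (G.neighborFinset a ∩ {ustar}).card = 1 := by
    intro a ha
    rw [Finset.card_eq_one]
    refine ⟨ustar, ?_⟩
    ext v
    simp only [Finset.mem_inter, Finset.mem_singleton]
    constructor
    · rintro ⟨_, rfl⟩; rfl
    · rintro rfl
      refine ⟨?_, rfl⟩
      rw [SimpleGraph.mem_neighborFinset]
      rw [hA, SimpleGraph.mem_neighborFinset] at ha
      exact ha.symm
  -- double counting between A and B
  have hfilter : ∀ (T : Finset V) (u : V), (G.neighborFinset u ∩ T).card =
      ∑ v ∈ T, if G.Adj u v then 1 else 0 := by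
    intro T u
    rw [← Finset.card_filter]
    congr 1
    ext v
    simp [SimpleGraph.mem_neighborFinset, and_comm]
  have hcross : ∑ u ∈ A, (G.neighborFinset u ∩ B).card
      = ∑ u ∈ B, (G.neighborFinset u ∩ A).card := by
    simp only [hfilter]
    rw [Finset.sum_comm]
    exact Finset.sum_congr rfl fun v _ => Finset.sum_congr rfl fun u _ => by
      simp only [G.adj_comm]
  set X : ℕ := ∑ u ∈ A, (G.neighborFinset u ∩ B).card with hX
  -- decomposition of D
  have hDdec : D = A.card + 2 * eA + X := by
    rw [hD, Finset.sum_congr rfl fun u _ => hdeg_decomp u]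
    rw [Finset.sum_add_distrib, Finset.sum_add_distrib]
    rw [Finset.sum_congr rfl hAone, Finset.sum_const, smul_eq_mul, mul_one]
    rw [heA, two_mul_edges_eq]
  -- total degree sum
  have hm2 : 2 * m = A.card + D + (X + 2 * eB) := by
    have htot : ∑ v, G.degree v = 2 * m := by
      rw [SimpleGraph.sum_degrees_eq_twice_card_edges, hsize]
    have hsub : insert ustar A ⊆ (Finset.univ : Finset V) := Finset.subset_univ _
    have hsplit := Finset.sum_sdiff (f := fun v => G.degree v) hsub
    rw [← hB] at hsplit
    have hins : ∑ v ∈ insert ustar A, G.degree v = A.card + D := by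
      rw [Finset.sum_insert hustar_notin_A, hD]
      congr 1
      rw [SimpleGraph.degree, hA]
    have hBsum : ∑ v ∈ B, G.degree v = X + 2 * eB := by
      rw [Finset.sum_congr rfl fun u hu => hdeg_decomp u]
      rw [Finset.sum_add_distrib, Finset.sum_add_distrib]
      rw [Finset.sum_congr rfl hBno, Finset.sum_const, smul_eq_mul, mul_zero, zero_add]
      rw [heB, two_mul_edges_eq, ← hcross, hX]
    rw [← htot, ← hsplit, hins, hBsum]
    ring
  -- main counting identity
  have hmain : D + eB = m + eA := by omega
  -- edges in Aplus equal edges in A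
  have heAplusIn : edgesIn G (Aplus : Set V) = eA := by
    have hset : {e ∈ G.edgeSet | ∀ v ∈ e, v ∈ (Aplus : Set V)}
        = {e ∈ G.edgeSet | ∀ v ∈ e, v ∈ (A : Set V)} := by
      ext e
      induction e with
      | _ a b =>
        simp only [Set.mem_setOf_eq, SimpleGraph.mem_edgeSet, Sym2.mem_iff]
        constructor
        · rintro ⟨h, hm⟩
          refine ⟨h, fun v hv => ?_⟩
          have := hm v hv
          simp only [Finset.mem_coe, hAplus, Finset.mem_filter] at this
          simpa using this.1
        · rintro ⟨h, hm⟩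
          have haA : a ∈ A := by simpa using hm a (Or.inl rfl)
          have hbA : b ∈ A := by simpa using hm b (Or.inr rfl)
          refine ⟨h, ?_⟩
          rintro v (rfl | rfl)
          · simp only [Finset.mem_coe, hAplus, Finset.mem_filter]
            exact ⟨haA, b, hbA, h⟩
          · simp only [Finset.mem_coe, hAplus, Finset.mem_filter]
            exact ⟨hbA, a, haA, h.symm⟩
    calc edgesIn G (Aplus : Set V) = edgesIn G (A : Set V) := by
          unfold edgesIn; rw [hset]
      _ = eA := edgesIn_eq_card G A
  have heBIn : edgesIn G (B : Set V) = eB := edgesIn_eq_card G B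
  -- conclude
  have hcast : (D : ℝ) = (m : ℝ) - eB + eA := by
    have : (D : ℝ) + eB = (m : ℝ) + eA := by exact_mod_cast congrArg (Nat.cast : ℕ → ℝ) hmain
    linarith
  constructor
  · rw [heAplusIn, heBIn]
    linarith [hρ2D, hcast]
  · rw [heAplusIn]
    have : (0 : ℝ) ≤ eB := Nat.cast_nonneg _
    linarith [hρ2D, hcast]
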